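/- Let (x_n, y_n, z_n, v_n) be the orbit of the level-3 local structure map L for rule 14 started at (x_0, y_0, z_0, v_0) = (1/2, 1/4, 1/8, 1/8). Then (x_n, y_n, z_n, v_n) converges to (1/2, 1/4, 0, 0) as n → ∞. -/
import Mathlib


open Filter

/-- Level-3 local structure map for rule 14.  In Lean, division by zero
yields zero, which matches the convention that the fraction
`v(y-z)z/(y(x-y))` is taken to be `0` whenever `y(x-y) = 0`. -/
noncomputable def L (p : ℝ × ℝ × ℝ × ℝ) : ℝ × ℝ × ℝ × ℝ :=
  match p with
  | (x, y, z, v) =>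
    (-x + z + 1,
     -2 * x + y + z + 1,
     1 + z + v - 3 * x + 2 * y - v * (y - z) * z / (y * (x - y)),
     x - 2 * y + z)

/-- Reduced dynamics: `a = x - 1/2`, `z` the third coordinate. -/
noncomputable def S : ℕ → ℝ × ℝ
  | 0 => (1/8, 7/32)
  | n+1 => ((S n).2 - (S n).1,
      (S n).2 * (1 + 16 * (S n).1 * ((S n).2 - (S n).1)) / (1 + 4 * (S n).1))

noncomputable def A (n : ℕ) : ℝ := (S n).1
noncomputable def Z (n : ℕ) : ℝ := (S n).2

lemma A_succ (n : ℕ) : A (n+1) = Z n - A n := rfl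

lemma Z_succ (n : ℕ) :
    Z (n+1) = Z n * (1 + 16 * A n * (Z n - A n)) / (1 + 4 * A n) := rfl

/-- The invariant region. -/
lemma inv (n : ℕ) : 0 < A n ∧ A n < Z n ∧ Z n ≤ 7/32 := by
  induction n with
  | zero => refine ⟨by norm_num [A, S], by norm_num [A, Z, S], by norm_num [Z, S]⟩
  | succ n ih =>
    obtain ⟨ha, haz, hz⟩ := ih
    have hz0 : 0 < Z n := ha.trans haz
    have hd : (0:ℝ) < 1 + 4 * A n := by linarith
    constructor
    · rw [A_succ]; linarith
    constructor
    · rw [A_succ, Z_succ, lt_div_iff₀ hd]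
      nlinarith [mul_pos ha (sub_pos.mpr haz), mul_pos hz0 (sub_pos.mpr haz),
        mul_pos ha hz0]
    · rw [Z_succ, div_le_iff₀ hd]
      nlinarith [mul_pos ha (sub_pos.mpr haz), mul_pos hz0 (sub_pos.mpr haz)]

lemma Z_pos (n : ℕ) : 0 < Z n := (inv n).1.trans (inv n).2.1

/-- The key decay estimate. -/
lemma Z_decay (n : ℕ) : Z (n+1) ≤ Z n - (4/15) * A n * Z n := by
  obtain ⟨ha, haz, hz⟩ := inv n
  have hz0 : 0 < Z n := ha.trans haz
  have hd : (0:ℝ) < 1 + 4 * A n := by linarith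
  rw [Z_succ, div_le_iff₀ hd]
  nlinarith [mul_pos ha hz0, mul_pos (mul_pos ha hz0) (sub_pos.mpr haz),
    mul_pos (mul_pos ha hz0) hz0]

lemma Z_antitone : Antitone Z := by
  apply antitone_nat_of_succ_le
  intro n
  have := Z_decay n
  have h1 := (inv n).1
  have h2 := Z_pos n
  nlinarith

lemma Z_eq_A_add (n : ℕ) : Z n = A n + A (n+1) := by
  rw [A_succ]; ring

/-- The orbit of `L` is described by the reduced dynamics. -/
lemma orbit_eq (n : ℕ) :
    L^[n+1] (1/2, 1/4, 1/8, 1/8) = (1/2 + A n, 1/4 + A n, Z n, A n) := by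
  induction n with
  | zero =>
    show L (1/2, 1/4, 1/8, 1/8) = _
    norm_num [L, A, Z, S]
  | succ n ih =>
    rw [Function.iterate_succ_apply', ih]
    obtain ⟨ha, haz, hz⟩ := inv n
    have hy : (1/4 + A n : ℝ) ≠ 0 := by linarith
    have hd : (1 + 4 * A n : ℝ) ≠ 0 := by linarith
    show (_, _, _, _) = (_, _, _, _)
    rw [A_succ, Z_succ]
    refine Prod.ext (by ring) (Prod.ext (by ring) (Prod.ext ?_ (by ring)))
    show (1 + Z n + A n - 3 * (1/2 + A n) + 2 * (1/4 + A n)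
        - A n * ((1/4 + A n) - Z n) * Z n
          / ((1/4 + A n) * ((1/2 + A n) - (1/4 + A n)))) = _
    rw [show ((1/2 + A n) - (1/4 + A n) : ℝ) = 1/4 by ring, eq_div_iff hd]
    field_simp
    ring

lemma tendsto_Z : Tendsto Z atTop (nhds 0) := by
  have hbdd : BddBelow (Set.range Z) := by
    refine ⟨0, ?_⟩
    rintro x ⟨n, rfl⟩
    exact (Z_pos n).le
  have hT : Tendsto Z atTop (nhds (⨅ n, Z n)) :=
    tendsto_atTop_ciInf Z_antitone hbdd
  set c := ⨅ n, Z n with hc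
  have hc0 : 0 ≤ c := le_ciInf fun n => (Z_pos n).le
  rcases eq_or_lt_of_le hc0 with h | h
  · rwa [← h] at hT
  · exfalso
    -- A n ≤ (15/(4c)) * (Z n - Z (n+1)) → A n → 0 → Z n → 0, contradiction
    have hcle : ∀ n, c ≤ Z n := fun n => ciInf_le hbdd n
    have hbound : ∀ n, A n ≤ 15 / (4 * c) * (Z n - Z (n+1)) := by
      intro n
      have h1 := Z_decay n
      have h2 := hcle n
      have ha := (inv n).1
      have hc4 : (0:ℝ) < 4 * c := by linarith
      rw [div_mul_eq_mul_div, le_div_iff₀ hc4]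
      nlinarith [mul_le_mul_of_nonneg_left h2 ha.le]
    have hshift : Tendsto (fun n => Z (n+1)) atTop (nhds c) :=
      (tendsto_add_atTop_iff_nat 1).mpr hT
    have hdiff : Tendsto (fun n => 15 / (4 * c) * (Z n - Z (n+1))) atTop (nhds 0) := by
      have := (hT.sub hshift).const_mul (15 / (4 * c))
      simpa using this
    have hA0 : Tendsto A atTop (nhds 0) :=
      squeeze_zero (fun n => (inv n).1.le) hbound hdiff
    have hA1 : Tendsto (fun n => A (n+1)) atTop (nhds 0) :=
      (tendsto_add_atTop_iff_nat 1).mpr hA0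
    have hZ0 : Tendsto Z atTop (nhds 0) := by
      have := hA0.add hA1
      simpa [← Z_eq_A_add] using this
    have : c = 0 := tendsto_nhds_unique hT hZ0
    linarith

lemma tendsto_A : Tendsto A atTop (nhds 0) := by
  have h1 : Tendsto (fun n => A (n+1)) atTop (nhds 0) := by
    apply squeeze_zero (fun n => (inv (n+1)).1.le) (fun n => ?_) tendsto_Z
    have := (inv n).1
    rw [A_succ]; linarith
  exact (tendsto_add_atTop_iff_nat 1).mp h1

theorem local_structure_orbit_converges :
    Tendsto (fun n : ℕ => L^[n] (1/2, 1/4, 1/8, 1/8)) atTop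
      (nhds ((1/2 : ℝ), (1/4 : ℝ), (0 : ℝ), (0 : ℝ))) := by
  have key : Tendsto (fun n : ℕ => L^[n+1] (1/2, 1/4, 1/8, 1/8)) atTop
      (nhds ((1/2 : ℝ), (1/4 : ℝ), (0 : ℝ), (0 : ℝ))) := by
    have h1 : Tendsto (fun n => (1/2 + A n : ℝ)) atTop (nhds (1/2)) := by
      simpa using tendsto_const_nhds.add tendsto_A
    have h2 : Tendsto (fun n => (1/4 + A n : ℝ)) atTop (nhds (1/4)) := by
      simpa using tendsto_const_nhds.add tendsto_A
    have : Tendsto (fun n : ℕ => ((1/2 + A n : ℝ), (1/4 + A n : ℝ), Z n, A n))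
        atTop (nhds ((1/2 : ℝ), (1/4 : ℝ), (0 : ℝ), (0 : ℝ))) :=
      h1.prodMk_nhds (h2.prodMk_nhds (tendsto_Z.prodMk_nhds tendsto_A))
    have heq : (fun n : ℕ => L^[n+1] (1/2, 1/4, 1/8, 1/8))
        = fun n : ℕ => ((1/2 + A n : ℝ), (1/4 + A n : ℝ), Z n, A n) := funext orbit_eq
    rw [heq]
    exact this
  exact (tendsto_add_atTop_iff_nat 1).mp key
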